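/- Let N be the abelian group generated by elements Π_{i,j} for i, j ∈ {0,1,2} and an element F, subject to the relations Σᵢ Π_{i,j} = F for each j and Σⱼ Π_{i,j} = F for each i. Let the cyclic group C₃ = ⟨σ⟩ act on N by σ(Π_{i,j}) = Π_{i+1 mod 3, j} and σ(F) = F. Then N is a free abelian group of rank 5 and H¹(C₃, N) ≅ ℤ/3ℤ. -/

import Mathlib

open Finsupp

/-- The free abelian group on symbols `Π_{i,j}` (`i, j ∈ ℤ/3`) and `F`. -/
abbrev FreeN : Type := ((ZMod 3 × ZMod 3) ⊕ Unit) →₀ ℤ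

/-- The generator `Π_{i,j}`. -/
noncomputable def pij (i j : ZMod 3) : FreeN := Finsupp.single (Sum.inl (i, j)) 1

/-- The generator `F` (hyperplane class). -/
noncomputable def Fcl : FreeN := Finsupp.single (Sum.inr ()) 1

/-- The subgroup of relations `Σᵢ Π_{i,j} = F` and `Σⱼ Π_{i,j} = F`. -/
noncomputable def rels : AddSubgroup FreeN :=
  AddSubgroup.closure
    ({r | ∃ j : ZMod 3, r = (∑ i : ZMod 3, pij i j) - Fcl} ∪
     {r | ∃ i : ZMod 3, r = (∑ j : ZMod 3, pij i j) - Fcl})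

/-- The class group `N`: quotient of the free group by the relations. -/
abbrev Ncl : Type := FreeN ⧸ rels

set_option linter.unusedTactic false
set_option linter.unreachableTactic false

lemma sum3 {M : Type*} [AddCommMonoid M] (f : ZMod 3 → M) :
    ∑ i : ZMod 3, f i = f 0 + f 1 + f 2 := by
  exact Fin.sum_univ_three (M := M) f

def vv : ((ZMod 3 × ZMod 3) ⊕ Unit) → (Fin 5 → ℤ)
  | Sum.inl p => !![(1:ℤ),0,0,0,0; 0,1,0,0,0; -1,-1,0,0,1;
                    0,0,1,0,0; 0,0,0,1,0; 0,0,-1,-1,1;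
                    -1,0,-1,0,1; 0,-1,0,-1,1; 1,1,1,1,-1] ⟨(3 * p.1.val + p.2.val) % 9, Nat.mod_lt _ (by norm_num)⟩
  | Sum.inr _ => ![0,0,0,0,1]

noncomputable def phiF : FreeN →+ (Fin 5 → ℤ) :=
  Finsupp.liftAddHom (fun s => zmultiplesHom (Fin 5 → ℤ) (vv s))

@[simp] lemma phiF_single (s) (n : ℤ) : phiF (Finsupp.single s n) = n • vv s := by
  simp [phiF]

lemma phiF_pij (i j : ZMod 3) : phiF (pij i j) = vv (Sum.inl (i, j)) := by
  simp [pij]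

lemma phiF_Fcl : phiF Fcl = ![0,0,0,0,1] := by
  simp [Fcl]; rfl

lemma hz3 : ∀ j : ZMod 3, j = 0 ∨ j = 1 ∨ j = 2 := by decide

lemma rels_le_ker_phiF : rels ≤ AddMonoidHom.ker phiF := by
  rw [rels, AddSubgroup.closure_le]
  rintro r (⟨j, rfl⟩ | ⟨i, rfl⟩) <;>
    [(rcases hz3 j with rfl | rfl | rfl); (rcases hz3 i with rfl | rfl | rfl)] <;>
    · show phiF _ = 0
      rw [map_sub, map_sum, sum3]
      simp only [phiF_pij, phiF_Fcl]
      decide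

noncomputable def phiQ : Ncl →+ (Fin 5 → ℤ) :=
  QuotientAddGroup.lift rels phiF rels_le_ker_phiF

@[simp] lemma phiQ_mk (m : FreeN) : phiQ (QuotientAddGroup.mk m) = phiF m := rfl

noncomputable def B : Fin 5 → Ncl :=
  ![QuotientAddGroup.mk (pij 0 0), QuotientAddGroup.mk (pij 0 1),
    QuotientAddGroup.mk (pij 1 0), QuotientAddGroup.mk (pij 1 1),
    QuotientAddGroup.mk Fcl]

noncomputable def psi : (Fin 5 → ℤ) →+ Ncl :=
  AddMonoidHom.mk' (fun x => ∑ k : Fin 5, x k • B k) (by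
    intro a b
    simp only [Pi.add_apply, add_zsmul]
    exact Finset.sum_add_distrib (f := fun k => a k • B k) (g := fun k => b k • B k))

lemma psi_apply (x : Fin 5 → ℤ) :
    psi x = x 0 • B 0 + x 1 • B 1 + x 2 • B 2 + x 3 • B 3 + x 4 • B 4 := by
  simp [psi, Fin.sum_univ_five]

-- row and column relations in the quotient
lemma mkr (i j : ZMod 3) : (QuotientAddGroup.mk (pij i j) : Ncl) = B 0 → True := fun _ => trivial

lemma row (i : ZMod 3) :
    (QuotientAddGroup.mk (pij i 0) : Ncl) + QuotientAddGroup.mk (pij i 1)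
      + QuotientAddGroup.mk (pij i 2) = QuotientAddGroup.mk Fcl := by
  have h : ((∑ j : ZMod 3, pij i j) - Fcl) ∈ rels :=
    AddSubgroup.subset_closure (Or.inr ⟨i, rfl⟩)
  have := (QuotientAddGroup.eq_zero_iff _).2 h
  rw [QuotientAddGroup.mk_sub, QuotientAddGroup.mk_sum, sum3, sub_eq_zero] at this
  simpa using this

lemma col (j : ZMod 3) :
    (QuotientAddGroup.mk (pij 0 j) : Ncl) + QuotientAddGroup.mk (pij 1 j)
      + QuotientAddGroup.mk (pij 2 j) = QuotientAddGroup.mk Fcl := by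
  have h : ((∑ i : ZMod 3, pij i j) - Fcl) ∈ rels :=
    AddSubgroup.subset_closure (Or.inl ⟨j, rfl⟩)
  have := (QuotientAddGroup.eq_zero_iff _).2 h
  rw [QuotientAddGroup.mk_sub, QuotientAddGroup.mk_sum, sum3, sub_eq_zero] at this
  simpa using this

lemma e0j (i : ZMod 3) : (QuotientAddGroup.mk (pij i 2) : Ncl) =
    QuotientAddGroup.mk Fcl - QuotientAddGroup.mk (pij i 0) - QuotientAddGroup.mk (pij i 1) := by
  rw [← row i]; abel

lemma e2j (j : ZMod 3) : (QuotientAddGroup.mk (pij 2 j) : Ncl) =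
    QuotientAddGroup.mk Fcl - QuotientAddGroup.mk (pij 0 j) - QuotientAddGroup.mk (pij 1 j) := by
  rw [← col j]; abel

lemma e22 : (QuotientAddGroup.mk (pij 2 2) : Ncl) =
    QuotientAddGroup.mk (pij 0 0) + QuotientAddGroup.mk (pij 0 1) + QuotientAddGroup.mk (pij 1 0)
      + QuotientAddGroup.mk (pij 1 1) - QuotientAddGroup.mk Fcl := by
  rw [e2j 2, e0j 0, e0j 1]; abel

lemma psi_phiF (m : FreeN) : psi (phiF m) = QuotientAddGroup.mk m := by
  have key : psi.comp phiF = QuotientAddGroup.mk' rels := by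
    apply Finsupp.addHom_ext
    intro s n
    have hn : (Finsupp.single s n : FreeN) = n • Finsupp.single s 1 := by
      rw [Finsupp.smul_single, smul_eq_mul, mul_one]
    rw [hn, map_zsmul, map_zsmul]
    congr 1
    show psi (phiF (Finsupp.single s 1)) = QuotientAddGroup.mk (Finsupp.single s 1)
    rw [phiF_single, one_zsmul]
    rcases s with ⟨i, j⟩ | ⟨⟩
    · rcases hz3 i with rfl | rfl | rfl <;> rcases hz3 j with rfl | rfl | rfl <;>
        rw [show Finsupp.single (Sum.inl _) 1 = pij _ _ from rfl, psi_apply] <;>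
        [ (have hv : vv (Sum.inl ((0:ZMod 3), (0:ZMod 3))) = ![1,0,0,0,0] := by decide);
          (have hv : vv (Sum.inl ((0:ZMod 3), (1:ZMod 3))) = ![0,1,0,0,0] := by decide);
          (have hv : vv (Sum.inl ((0:ZMod 3), (2:ZMod 3))) = ![-1,-1,0,0,1] := by decide);
          (have hv : vv (Sum.inl ((1:ZMod 3), (0:ZMod 3))) = ![0,0,1,0,0] := by decide);
          (have hv : vv (Sum.inl ((1:ZMod 3), (1:ZMod 3))) = ![0,0,0,1,0] := by decide);
          (have hv : vv (Sum.inl ((1:ZMod 3), (2:ZMod 3))) = ![0,0,-1,-1,1] := by decide);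
          (have hv : vv (Sum.inl ((2:ZMod 3), (0:ZMod 3))) = ![-1,0,-1,0,1] := by decide);
          (have hv : vv (Sum.inl ((2:ZMod 3), (1:ZMod 3))) = ![0,-1,0,-1,1] := by decide);
          (have hv : vv (Sum.inl ((2:ZMod 3), (2:ZMod 3))) = ![1,1,1,1,-1] := by decide)] <;>
        rw [hv] <;>
        simp only [B, Matrix.cons_val_zero, Matrix.cons_val_one, Matrix.head_cons,
          Matrix.cons_val_two, Matrix.cons_val_three, Matrix.cons_val_four, Matrix.tail_cons,
          one_zsmul, neg_zsmul, zero_zsmul] <;>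
        [ abel; abel; (rw [e0j 0]; abel); abel; abel; (rw [e0j 1]; abel);
          (rw [e2j 0]; abel); (rw [e2j 1]; abel); (rw [e22]; abel)]
    · show psi (vv (Sum.inr ())) = QuotientAddGroup.mk Fcl
      have hv : vv (Sum.inr ()) = ![0,0,0,0,1] := rfl
      rw [hv, psi_apply]
      simp only [B, Matrix.cons_val_zero, Matrix.cons_val_one, Matrix.head_cons,
        Matrix.cons_val_two, Matrix.cons_val_three, Matrix.cons_val_four, Matrix.tail_cons,
        one_zsmul, zero_zsmul]
      abel
  exact DFunLike.congr_fun key m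

lemma psi_phiQ (a : Ncl) : psi (phiQ a) = a := by
  induction a using QuotientAddGroup.induction_on with
  | H m => rw [phiQ_mk, psi_phiF]

lemma B0 : B 0 = QuotientAddGroup.mk (pij 0 0) := rfl
lemma B1 : B 1 = QuotientAddGroup.mk (pij 0 1) := rfl
lemma B2 : B 2 = QuotientAddGroup.mk (pij 1 0) := rfl
lemma B3 : B 3 = QuotientAddGroup.mk (pij 1 1) := rfl
lemma B4 : B 4 = QuotientAddGroup.mk Fcl := rfl

lemma phiQ_B0 : phiQ (B 0) = ![1,0,0,0,0] := by rw [B0, phiQ_mk, phiF_pij]; decide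
lemma phiQ_B1 : phiQ (B 1) = ![0,1,0,0,0] := by rw [B1, phiQ_mk, phiF_pij]; decide
lemma phiQ_B2 : phiQ (B 2) = ![0,0,1,0,0] := by rw [B2, phiQ_mk, phiF_pij]; decide
lemma phiQ_B3 : phiQ (B 3) = ![0,0,0,1,0] := by rw [B3, phiQ_mk, phiF_pij]; decide
lemma phiQ_B4 : phiQ (B 4) = ![0,0,0,0,1] := by rw [B4, phiQ_mk, phiF_Fcl]

lemma phiQ_psi (x : Fin 5 → ℤ) : phiQ (psi x) = x := by
  rw [psi_apply]
  simp only [map_add, map_zsmul, phiQ_B0, phiQ_B1, phiQ_B2, phiQ_B3, phiQ_B4]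
  funext k
  fin_cases k <;>
    simp [Matrix.cons_val_zero, Matrix.cons_val_one, Matrix.head_cons] <;> omega

noncomputable def NclEquiv : Ncl ≃+ (Fin 5 → ℤ) :=
  AddMonoidHom.toAddEquiv phiQ psi
    (AddMonoidHom.ext fun a => psi_phiQ a) (AddMonoidHom.ext fun x => phiQ_psi x)

lemma phiQ_inj : Function.Injective phiQ := by
  intro a b h
  rw [← psi_phiQ a, h, psi_phiQ]

lemma Ncl_ext {M : Type*} [AddCommGroup M] ⦃f g : Ncl →+ M⦄
    (h : ∀ s, f (QuotientAddGroup.mk (Finsupp.single s 1)) =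
      g (QuotientAddGroup.mk (Finsupp.single s 1))) : f = g := by
  apply QuotientAddGroup.addMonoidHom_ext
  apply Finsupp.addHom_ext
  intro s n
  have hn : (Finsupp.single s n : FreeN) = n • Finsupp.single s 1 := by
    rw [Finsupp.smul_single, smul_eq_mul, mul_one]
  show f (QuotientAddGroup.mk (Finsupp.single s n)) = g (QuotientAddGroup.mk (Finsupp.single s n))
  have hmk : (QuotientAddGroup.mk (Finsupp.single s n) : Ncl)
      = n • QuotientAddGroup.mk (Finsupp.single s 1) := by
    rw [hn]; rfl
  rw [hmk, map_zsmul, map_zsmul, h s]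

def lval : ((ZMod 3 × ZMod 3) ⊕ Unit) → ZMod 3
  | Sum.inl p => 1 - p.2
  | Sum.inr _ => 0

noncomputable def lamF : FreeN →+ ZMod 3 :=
  Finsupp.liftAddHom (fun s => zmultiplesHom (ZMod 3) (lval s))

@[simp] lemma lamF_single (s) (n : ℤ) : lamF (Finsupp.single s n) = n • lval s := by
  simp [lamF]

lemma lamF_pij (i j : ZMod 3) : lamF (pij i j) = 1 - j := by
  simp [pij, lval]

lemma lamF_Fcl : lamF Fcl = 0 := by simp [Fcl, lval]

lemma rels_le_ker_lamF : rels ≤ AddMonoidHom.ker lamF := by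
  rw [rels, AddSubgroup.closure_le]
  rintro r (⟨j, rfl⟩ | ⟨i, rfl⟩) <;>
    · show lamF _ = 0
      rw [map_sub, map_sum, sum3]
      simp only [lamF_pij, lamF_Fcl]
      first
        | (rcases hz3 j with rfl | rfl | rfl <;> decide)
        | (rcases hz3 i with rfl | rfl | rfl <;> decide)

noncomputable def lamQ : Ncl →+ ZMod 3 :=
  QuotientAddGroup.lift rels lamF rels_le_ker_lamF

@[simp] lemma lamQ_mk (m : FreeN) : lamQ (QuotientAddGroup.mk m) = lamF m := rfl

def Mmap : (Fin 5 → ℤ) →+ (Fin 5 → ℤ) :=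
  AddMonoidHom.mk' (fun x => ![-(x 2), -(x 3), x 0 - x 2, x 1 - x 3, x 2 + x 3 + x 4]) (by
    intro a b
    funext k
    fin_cases k <;> simp <;> ring)

lemma Mmap_apply (x : Fin 5 → ℤ) :
    Mmap x = ![-(x 2), -(x 3), x 0 - x 2, x 1 - x 3, x 2 + x 3 + x 4] := rfl

section Rho

variable (ρ : Representation ℤ (Multiplicative (ZMod 3)) Ncl)
    (hp : ∀ i j : ZMod 3,
      ρ (Multiplicative.ofAdd (1 : ZMod 3)) (QuotientAddGroup.mk (pij i j)) =
        QuotientAddGroup.mk (pij (i + 1) j))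
    (hF : ρ (Multiplicative.ofAdd (1 : ZMod 3)) (QuotientAddGroup.mk Fcl) =
        QuotientAddGroup.mk Fcl)

local notation "σ" => Multiplicative.ofAdd (1 : ZMod 3)

include hp hF in
lemma lamQ_rho : ∀ a : Ncl, lamQ (ρ σ a) = lamQ a := by
  have key : lamQ.comp (ρ σ).toAddMonoidHom = lamQ := by
    apply Ncl_ext
    rintro (⟨i, j⟩ | ⟨⟩)
    · show lamQ (ρ σ (QuotientAddGroup.mk (pij i j))) = lamQ (QuotientAddGroup.mk (pij i j))
      rw [hp i j, lamQ_mk, lamQ_mk, lamF_pij, lamF_pij]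
    · show lamQ (ρ σ (QuotientAddGroup.mk Fcl)) = lamQ (QuotientAddGroup.mk Fcl)
      rw [hF]
  exact fun a => DFunLike.congr_fun key a

include hp hF in
lemma phiQ_rho : ∀ a : Ncl, phiQ (ρ σ a) = Mmap (phiQ a) := by
  have key : phiQ.comp (ρ σ).toAddMonoidHom = Mmap.comp phiQ := by
    apply Ncl_ext
    rintro (⟨i, j⟩ | ⟨⟩)
    · show phiQ (ρ σ (QuotientAddGroup.mk (pij i j))) = Mmap (phiQ (QuotientAddGroup.mk (pij i j)))
      rw [hp i j, phiQ_mk, phiQ_mk, phiF_pij, phiF_pij]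
      rcases hz3 i with rfl | rfl | rfl <;> rcases hz3 j with rfl | rfl | rfl <;> decide
    · show phiQ (ρ σ (QuotientAddGroup.mk Fcl)) = Mmap (phiQ (QuotientAddGroup.mk Fcl))
      rw [hF, phiQ_mk, phiF_Fcl]
      decide
  exact fun a => DFunLike.congr_fun key a

include hp hF in
lemma lamQ_coord : ∀ a : Ncl, lamQ a = ((phiQ a 0 + phiQ a 2 : ℤ) : ZMod 3) := by
  have key : lamQ = ((Int.castAddHom (ZMod 3)).comp
      ((Pi.evalAddMonoidHom (fun _ : Fin 5 => ℤ) 0 + Pi.evalAddMonoidHom _ 2).comp phiQ)) := by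
    apply Ncl_ext
    rintro (⟨i, j⟩ | ⟨⟩) <;>
      simp only [AddMonoidHom.comp_apply, AddMonoidHom.add_apply, Pi.evalAddMonoidHom_apply,
        phiQ_mk, lamQ_mk]
    · show lamF (pij i j) = (Int.castAddHom (ZMod 3))
        (phiF (pij i j) 0 + phiF (pij i j) 2)
      rw [lamF_pij, phiF_pij]
      rcases hz3 i with rfl | rfl | rfl <;> rcases hz3 j with rfl | rfl | rfl <;> decide
    · show lamF Fcl = (Int.castAddHom (ZMod 3)) (phiF Fcl 0 + phiF Fcl 2)
      rw [lamF_Fcl, phiF_Fcl]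
      decide
  exact fun a => DFunLike.congr_fun key a

end Rho

open groupCohomology

set_option maxHeartbeats 1000000 in
/-- `N` is free abelian of rank `5`, and for the `C₃`-action cyclically permuting the
first index of `Π_{i,j}` and fixing `F`, one has `H¹(C₃, N) ≅ ℤ/3ℤ`. -/
theorem stmt5 (ρ : Representation ℤ (Multiplicative (ZMod 3)) Ncl)
    (hp : ∀ i j : ZMod 3,
      ρ (Multiplicative.ofAdd (1 : ZMod 3)) (QuotientAddGroup.mk (pij i j)) =
        QuotientAddGroup.mk (pij (i + 1) j))
    (hF : ρ (Multiplicative.ofAdd (1 : ZMod 3)) (QuotientAddGroup.mk Fcl) =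
        QuotientAddGroup.mk Fcl) :
    Nonempty (Ncl ≃+ (Fin 5 → ℤ)) ∧
    Nonempty (groupCohomology.H1 (Rep.of ρ) ≃+ ZMod 3) := by
  refine ⟨⟨NclEquiv⟩, ?_⟩
  set G := Multiplicative (ZMod 3) with hG
  set σ : G := Multiplicative.ofAdd (1 : ZMod 3) with hσ
  set A : Rep ℤ G := Rep.of ρ with hA
  have hAρ : ∀ (g : G) (a : Ncl), A.ρ g a = ρ g a := fun g a => rfl
  have hρ1 : ∀ a : Ncl, ρ (1 : G) a = a := fun a => by rw [map_one]; rfl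
  have hρmul : ∀ (g h : G) (a : Ncl), ρ (g * h) a = ρ g (ρ h a) := fun g h a => by
    rw [map_mul]; rfl
  -- the linear functional on cocycles
  set Phi : cocycles₁ A →ₗ[ℤ] ZMod 3 :=
    { toFun := fun f => lamQ (f.1 σ)
      map_add' := fun f g => by
        show lamQ (f.1 σ + g.1 σ) = lamQ (f.1 σ) + lamQ (g.1 σ)
        exact map_add _ _ _
      map_smul' := fun n f => by
        show lamQ (n • (f.1 σ)) = n • lamQ (f.1 σ)
        exact map_zsmul lamQ _ _ } with hPhi
  set π' : cocycles₁ A →ₗ[ℤ] H1 A := (H1π A).hom with hπ'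
  have hB : LinearMap.ker π' ≤ LinearMap.ker Phi := by
    intro f hf
    rw [LinearMap.mem_ker, hπ', H1π_eq_zero_iff] at hf
    obtain ⟨x, hx⟩ := hf
    have hx' : ∀ g : G, ρ g (show Ncl from x) - (show Ncl from x) = f.1 g := fun g => by
      have := congrFun hx g; rw [d₀₁_hom_apply] at this; exact this
    show lamQ (f.1 σ) = 0
    rw [← hx' σ, map_sub, lamQ_rho ρ hp hF, sub_self]
  have hg3 : ∀ g : G, g = 1 ∨ g = σ ∨ g = σ * σ := by decide
  -- an explicit nontrivial cocycle
  set t : Ncl := QuotientAddGroup.mk (pij 0 0) - QuotientAddGroup.mk (pij 0 1) with ht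
  have h1t : ρ σ t = QuotientAddGroup.mk (pij 1 0) - QuotientAddGroup.mk (pij 1 1) := by
    rw [ht, map_sub, hp, hp, show (0:ZMod 3)+1 = 1 from by decide]
  have h2t : ρ σ (ρ σ t) =
      QuotientAddGroup.mk (pij 2 0) - QuotientAddGroup.mk (pij 2 1) := by
    rw [h1t, map_sub, hp, hp, show (1:ZMod 3)+1 = 2 from by decide]
  have hnorm_t : ρ σ (ρ σ t) + ρ σ t + t = 0 := by
    rw [h2t, h1t, ht, sub_add_sub_comm, sub_add_sub_comm, sub_eq_zero,
      show (QuotientAddGroup.mk (pij 2 0) : Ncl) + QuotientAddGroup.mk (pij 1 0)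
        + QuotientAddGroup.mk (pij 0 0)
        = QuotientAddGroup.mk (pij 0 0) + QuotientAddGroup.mk (pij 1 0)
        + QuotientAddGroup.mk (pij 2 0) from by abel, col 0,
      show (QuotientAddGroup.mk (pij 2 1) : Ncl) + QuotientAddGroup.mk (pij 1 1)
        + QuotientAddGroup.mk (pij 0 1)
        = QuotientAddGroup.mk (pij 0 1) + QuotientAddGroup.mk (pij 1 1)
        + QuotientAddGroup.mk (pij 2 1) from by abel, col 1]
  have hρ3t : ρ σ (ρ σ (ρ σ t)) = t := by
    rw [← hρmul, ← hρmul, show σ * σ * σ = 1 from by decide, hρ1]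
  set c : G → Ncl := fun g => if g = σ then t else if g = σ * σ then t + ρ σ t else 0 with hc
  have hc1 : c 1 = 0 := by
    rw [hc]
    simp only [if_neg (show (1 : G) ≠ σ from by decide),
      if_neg (show (1 : G) ≠ σ * σ from by decide)]
  have hcσ : c σ = t := by rw [hc]; simp only [if_pos rfl, if_true]
  have hcσσ : c (σ * σ) = t + ρ σ t := by
    rw [hc]
    simp only [if_neg (show σ * σ ≠ σ from by decide), if_pos rfl, if_true]
  clear_value t c
  have hcmem : c ∈ cocycles₁ A := by
    rw [mem_cocycles₁_iff]
    intro g h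
    rcases hg3 g with rfl | rfl | rfl <;> rcases hg3 h with rfl | rfl | rfl
    · rw [one_mul, hc1, hAρ, hρ1, add_zero]
    · rw [one_mul, hc1, add_zero, hAρ, hρ1]
    · rw [one_mul, hc1, add_zero, hAρ, hρ1]
    · rw [mul_one, hc1, hAρ, map_zero, zero_add]
    · rw [hcσσ, hcσ, hAρ]
      abel
    · rw [show σ * (σ * σ) = 1 from by decide, hc1, hcσσ, hcσ, hAρ, map_add]
      rw [eq_comm, ← hnorm_t]
      abel
    · rw [mul_one, hc1, hAρ, map_zero, zero_add]
    · rw [show (σ * σ) * σ = 1 from by decide, hc1, hcσ, hcσσ, hAρ, hρmul]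
      rw [eq_comm, ← hnorm_t]
      abel
    · rw [show (σ * σ) * (σ * σ) = σ from by decide, hcσ, hcσσ, hAρ, hρmul,
        map_add, map_add, hρ3t]
      have hsum : (ρ σ) ((ρ σ) t) + (ρ σ) t = -t := add_eq_zero_iff_eq_neg.1 hnorm_t
      calc t = ((ρ σ) ((ρ σ) t) + (ρ σ) t) + (t + t) := by rw [hsum]; abel
        _ = _ := by abel
  have hPhic : Phi ⟨c, hcmem⟩ = 1 := by
    show lamQ (c σ) = 1
    rw [hcσ, ht, map_sub, lamQ_mk, lamQ_mk, lamF_pij, lamF_pij]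
    decide
  -- surjectivity of Phi
  have hsurj : Function.Surjective Phi := by
    intro z
    refine ⟨(z.val : ℤ) • ⟨c, hcmem⟩, ?_⟩
    rw [map_smul]
    show (z.val : ℤ) • Phi ⟨c, hcmem⟩ = z
    rw [hPhic, zsmul_eq_mul, mul_one, Int.cast_natCast, ZMod.natCast_rightInverse z]
  -- kernel of Phi is contained in the coboundaries
  have hK : LinearMap.ker Phi ≤ LinearMap.ker π' := by
    intro f hf
    have hlam : lamQ (f.1 σ) = 0 := hf
    have hcoc := (mem_cocycles₁_iff f.1).1 f.2
    set a : Ncl := f.1 σ with ha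
    have h2 : f.1 (σ * σ) = ρ σ a + a := hcoc σ σ
    have hn : ρ σ (ρ σ a + a) + a = 0 := by
      have h3 := hcoc σ (σ * σ)
      have hone : f.1 (1 : G) = (0 : Ncl) := cocycles₁_map_one f
      rw [show σ * (σ * σ) = 1 from by decide, hone, h2, hAρ] at h3
      rw [← h3]
    set x : Fin 5 → ℤ := phiQ a with hx
    have hnx : Mmap (Mmap x + x) + x = 0 := by
      have := congrArg phiQ hn
      rw [map_add, map_zero, phiQ_rho ρ hp hF, map_add, phiQ_rho ρ hp hF] at this
      exact this
    have hs : x 0 + x 1 + x 2 + x 3 + 3 * x 4 = 0 := by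
      have h4 := congrFun hnx 4
      simp only [Mmap_apply, Pi.add_apply, Pi.zero_apply] at h4
      simp at h4
      omega
    have hdvd : (3 : ℤ) ∣ (x 0 + x 2) := by
      have := lamQ_coord ρ hp hF a
      rw [hlam, ← hx] at this
      exact (ZMod.intCast_zmod_eq_zero_iff_dvd _ 3).1 this.symm
    obtain ⟨cc, hcc⟩ := hdvd
    have hdd : x 1 + x 3 = 3 * (-(x 4) - cc) := by omega
    set y : Ncl := psi ![-(x 0) + cc, -(x 1) + (-(x 4) - cc), -cc, -(-(x 4) - cc), 0] with hy
    have hTy : ρ σ y - y = a := by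
      apply phiQ_inj
      rw [map_sub, phiQ_rho ρ hp hF, hy, phiQ_psi, ← hx]
      funext k
      fin_cases k <;> simp [Mmap_apply] <;> omega
    rw [LinearMap.mem_ker, hπ', H1π_eq_zero_iff]
    refine ⟨y, funext fun g => ?_⟩
    rw [d₀₁_hom_apply]
    rcases hg3 g with rfl | rfl | rfl
    · rw [hAρ, hρ1, sub_self, cocycles₁_map_one]
    · rw [hAρ, hTy]
      exact ha
    · show ρ (σ * σ) y - y = f.1 (σ * σ)
      rw [hρmul, h2, ← hTy, map_sub]
      abel
  -- assemble the equivalence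
  have hπs : Function.Surjective π' := (ModuleCat.epi_iff_surjective (H1π A)).1 inferInstance
  set K := LinearMap.ker π' with hKdef
  have hinj : Function.Injective (Submodule.liftQ (R := ℤ) (R₂ := ℤ) (M := cocycles₁ A) (M₂ := ZMod 3)
    (τ₁₂ := RingHom.id ℤ) K Phi hB) := by
    rw [← LinearMap.ker_eq_bot]
    exact Submodule.ker_liftQ_eq_bot _ _ _ hK
  have hsurj2 : Function.Surjective (Submodule.liftQ (R := ℤ) (R₂ := ℤ) (M := cocycles₁ A) (M₂ := ZMod 3)
    (τ₁₂ := RingHom.id ℤ) K Phi hB) := by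
    intro z
    obtain ⟨f, hf⟩ := hsurj z
    exact ⟨Submodule.Quotient.mk f, by rwa [Submodule.liftQ_apply]⟩
  have e1 := LinearMap.quotKerEquivOfSurjective (R := ℤ) (M := cocycles₁ A) (M₂ := H1 A) π' hπs
  have e2 := LinearEquiv.ofBijective _ ⟨hinj, hsurj2⟩
  exact ⟨(e1.symm.trans e2).toAddEquiv⟩
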